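/- Characterization of single-agent believable true lies: a single-agent announcement-free formula φ in disjunctive normal form is a believable true lie — that is, (¬φ ∧ ◇φ) → [φ]φ is valid on the class KD45 — if and only if φ is not a disjunctive lying form. -/

import Mathlib

inductive Form (A : Type) : Type
  | atom : ℕ → Form A
  | neg  : Form A → Form A
  | conj : Form A → Form A → Form A
  | box  : A → Form A → Form A
  | ann  : Form A → Form A → Form A
  deriving DecidableEq

namespace Form

/-- ◇_a φ := ¬□_a¬φ -/
def dia {A : Type} (a : A) (φ : Form A) : Form A := .neg (.box a (.neg φ))

/-- φ → ψ := ¬(φ ∧ ¬ψ) -/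
def imp {A : Type} (φ ψ : Form A) : Form A := .neg (.conj φ (.neg ψ))

/-- φ ∨ ψ := ¬(¬φ ∧ ¬ψ) -/
def or {A : Type} (φ ψ : Form A) : Form A := .neg (.conj (.neg φ) (.neg ψ))

/-- ⊥ := p ∧ ¬p -/
def bot {A : Type} : Form A := .conj (.atom 0) (.neg (.atom 0))

def top {A : Type} : Form A := .neg bot

def iff {A : Type} (φ ψ : Form A) : Form A := .conj (imp φ ψ) (imp ψ φ)

end Form

/-- A Kripke model over agents `A` with state set `S`. -/
structure Model (A S : Type) where
  R : A → S → S → Prop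
  V : ℕ → S → Prop

/-- Arrow elimination: keep only arrows pointing to states satisfying `P`. -/
def Model.restrict {A S : Type} (M : Model A S) (P : S → Prop) : Model A S :=
  ⟨fun a s t => M.R a s t ∧ P t, M.V⟩

/-- Satisfaction, with believed announcements interpreted by arrow elimination. -/
def Sat {A S : Type} : Model A S → Form A → S → Prop
  | M, .atom n, s => M.V n s
  | M, .neg φ, s => ¬ Sat M φ s
  | M, .conj φ ψ, s => Sat M φ s ∧ Sat M ψ s
  | M, .box a φ, s => ∀ t : S, M.R a s t → Sat M φ t
  | M, .ann φ ψ, s => Sat (M.restrict (fun t => Sat M φ t)) ψ s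

/-- K45: every accessibility relation is transitive and euclidean. -/
def isK45 {A S : Type} (M : Model A S) : Prop :=
  ∀ a : A, (∀ x y z : S, M.R a x y → M.R a y z → M.R a x z) ∧
    (∀ x y z : S, M.R a x y → M.R a x z → M.R a y z)

/-- KD45: every accessibility relation is transitive, euclidean and serial. -/
def isKD45 {A S : Type} (M : Model A S) : Prop :=
  ∀ a : A, (∀ x y z : S, M.R a x y → M.R a y z → M.R a x z) ∧
    (∀ x y z : S, M.R a x y → M.R a x z → M.R a y z) ∧
    (∀ x : S, ∃ y : S, M.R a x y)

/-- A literal: a propositional variable together with a polarity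
(true = the variable itself, false = its negation). -/
abbrev Lit : Type := ℕ × Bool

/-- The formula corresponding to a literal (single agent). -/
def Lit.toForm (l : Lit) : Form Unit :=
  if l.2 then Form.atom l.1 else Form.neg (Form.atom l.1)

/-- Negation of a literal, with double negation removed. -/
def Lit.negate (l : Lit) : Lit := (l.1, !l.2)

/-- Conjunction of a list of formulas (empty conjunction = ⊤). -/
def bigConj (L : List (Form Unit)) : Form Unit := L.foldr Form.conj Form.top

/-- Disjunction of a list of formulas (empty disjunction = ⊥). -/
def bigOr (L : List (Form Unit)) : Form Unit := L.foldr Form.or Form.bot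

/-- Conjunction of a list of literals. -/
def litConj (L : List Lit) : Form Unit := bigConj (L.map Lit.toForm)

/-- Disjunction of a list of literals. -/
def litDisj (L : List Lit) : Form Unit := bigOr (L.map Lit.toForm)

/-- β̄: the conjunction of the negated literals (double negations removed) of a
disjunction β of literals. -/
def negLitConj (L : List Lit) : Form Unit := bigConj (L.map (fun l => Lit.toForm l.negate))

/-- A conjunct δ = α ∧ □β₁ ∧ … ∧ □β_n ∧ ◇γ₁ ∧ … ∧ ◇γ_m of a disjunctive normal
form: α and each γ are conjunctions of literals, each β is a disjunction of
literals. -/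
structure DNFConj where
  alpha : List Lit
  boxes : List (List Lit)
  dias  : List (List Lit)
  deriving DecidableEq

/-- δ^α, as a formula. -/
def DNFConj.alphaForm (δ : DNFConj) : Form Unit := litConj δ.alpha

/-- δ^{□◇} = □β₁ ∧ … ∧ □β_n ∧ ◇γ₁ ∧ … ∧ ◇γ_m. -/
def DNFConj.boxDiaForm (δ : DNFConj) : Form Unit :=
  Form.conj (bigConj (δ.boxes.map (fun β => Form.box () (litDisj β))))
    (bigConj (δ.dias.map (fun γ => Form.dia () (litConj γ))))

/-- The formula of a DNF conjunct. -/
def DNFConj.toForm (δ : DNFConj) : Form Unit := Form.conj δ.alphaForm δ.boxDiaForm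

/-- A formula in disjunctive normal form: a disjunction of conjuncts. -/
abbrev DNF : Type := List DNFConj

/-- The formula of a disjunctive normal form. -/
def DNF.toForm (φ : DNF) : Form Unit := bigOr (φ.map DNFConj.toForm)

/-- t(θ) = θ^α ∧ ⋀_{◇γ a conjunct of θ} ⋁_{σ ∈ S} ◇(σ^α ∧ γ). -/
def tForm (Ssel : List DNFConj) (θ : DNFConj) : Form Unit :=
  Form.conj θ.alphaForm
    (bigConj (θ.dias.map (fun γ =>
      bigOr (Ssel.map (fun σ => Form.dia () (Form.conj σ.alphaForm (litConj γ)))))))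

/-- χ₁ = ⋀_{θ∈T} t(θ) ∧ ⋀_{θ a disjunct of φ not in T} ¬t(θ). -/
def chi1 (φ : DNF) (Ssel Tsel : List DNFConj) : Form Unit :=
  Form.conj (bigConj (Tsel.map (tForm Ssel)))
    (bigConj ((φ.filter (fun δ => !(Tsel.contains δ))).map (fun δ => Form.neg (tForm Ssel δ))))

/-- χ₂ = ⋀_{σ∈S} σ^{□◇} ∧ ⋀_{σ a disjunct of φ not in S} ¬σ^{□◇}. -/
def chi2 (φ : DNF) (Ssel : List DNFConj) : Form Unit :=
  Form.conj (bigConj (Ssel.map DNFConj.boxDiaForm))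
    (bigConj ((φ.filter (fun δ => !(Ssel.contains δ))).map (fun δ => Form.neg δ.boxDiaForm)))

/-- χ₃ = ⋀_{θ∈T} ⋁_{σ∈S} ◇(σ^α ∧ β̄_θ), where β_θ is the chosen box conjunct of θ. -/
def chi3 (Ssel Tsel : List DNFConj) (βsel : DNFConj → List Lit) : Form Unit :=
  bigConj (Tsel.map (fun θ =>
    bigOr (Ssel.map (fun σ => Form.dia () (Form.conj σ.alphaForm (negLitConj (βsel θ)))))))

/-- χ = ¬φ ∧ ◇φ ∧ χ₁ ∧ χ₂ ∧ χ₃. -/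
def chiForm (φ : DNF) (Ssel Tsel : List DNFConj) (βsel : DNFConj → List Lit) : Form Unit :=
  Form.conj (Form.neg (DNF.toForm φ))
    (Form.conj (Form.dia () (DNF.toForm φ))
      (Form.conj (chi1 φ Ssel Tsel)
        (Form.conj (chi2 φ Ssel) (chi3 Ssel Tsel βsel))))

/-- Satisfiability on the class KD45. -/
def KD45Sat (χ : Form Unit) : Prop :=
  ∃ (S : Type) (M : Model Unit S) (s : S), isKD45 M ∧ Sat M χ s

/-- φ (in DNF) is a disjunctive lying form iff there are sets S and T of
disjuncts of φ and a chosen conjunct □β_θ of each θ ∈ T such that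
χ = ¬φ ∧ ◇φ ∧ χ₁ ∧ χ₂ ∧ χ₃ is KD45-satisfiable (equivalently, any DNF of χ is
clear). -/
def IsDisjunctiveLyingForm (φ : DNF) : Prop :=
  ∃ (Ssel Tsel : List DNFConj) (βsel : DNFConj → List Lit),
    (∀ σ ∈ Ssel, σ ∈ φ) ∧
    (∀ θ ∈ Tsel, θ ∈ φ) ∧
    (∀ θ ∈ Tsel, βsel θ ∈ θ.boxes) ∧
    KD45Sat (chiForm φ Ssel Tsel βsel)

section BasicSat
variable {S : Type} {M : Model Unit S} {s : S}

lemma sat_top : Sat M Form.top s := by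
  simp only [Form.top, Form.bot, Sat]; tauto

lemma sat_bot : ¬ Sat M Form.bot s := by
  simp only [Form.bot, Sat]; tauto

lemma sat_or {φ ψ : Form Unit} : Sat M (Form.or φ ψ) s ↔ (Sat M φ s ∨ Sat M ψ s) := by
  simp only [Form.or, Sat]; tauto

lemma sat_imp {φ ψ : Form Unit} : Sat M (Form.imp φ ψ) s ↔ (Sat M φ s → Sat M ψ s) := by
  simp only [Form.imp, Sat]; tauto

lemma sat_dia {φ : Form Unit} : Sat M (Form.dia () φ) s ↔ ∃ t, M.R () s t ∧ Sat M φ t := by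
  show (¬ ∀ t, M.R () s t → ¬ Sat M φ t) ↔ _
  push_neg; rfl

lemma sat_bigConj {L : List (Form Unit)} : Sat M (bigConj L) s ↔ ∀ ψ ∈ L, Sat M ψ s := by
  induction L with
  | nil => simpa [bigConj] using sat_top
  | cons a l ih =>
      show (Sat M a s ∧ Sat M (bigConj l) s) ↔ _
      rw [ih]; simp

lemma sat_bigOr {L : List (Form Unit)} : Sat M (bigOr L) s ↔ ∃ ψ ∈ L, Sat M ψ s := by
  induction L with
  | nil => simpa [bigOr] using sat_bot
  | cons a l ih =>
      show Sat M (Form.or a (bigOr l)) s ↔ _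
      rw [sat_or, ih]; simp

lemma sat_bigConj_map {α : Type*} {f : α → Form Unit} {L : List α} :
    Sat M (bigConj (L.map f)) s ↔ ∀ x ∈ L, Sat M (f x) s := by
  rw [sat_bigConj]
  constructor
  · intro h x hx; exact h _ (List.mem_map_of_mem (f := f) hx)
  · intro h ψ hψ; rcases List.mem_map.1 hψ with ⟨x, hx, rfl⟩; exact h x hx

lemma sat_bigOr_map {α : Type*} {f : α → Form Unit} {L : List α} :
    Sat M (bigOr (L.map f)) s ↔ ∃ x ∈ L, Sat M (f x) s := by
  rw [sat_bigOr]
  constructor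
  · intro ⟨ψ, hψ, h⟩; rcases List.mem_map.1 hψ with ⟨x, hx, rfl⟩; exact ⟨x, hx, h⟩
  · intro ⟨x, hx, h⟩; exact ⟨_, List.mem_map_of_mem (f := f) hx, h⟩

lemma sat_lit_restrict {P : S → Prop} {l : Lit} :
    Sat (M.restrict P) (Lit.toForm l) s ↔ Sat M (Lit.toForm l) s := by
  rcases l with ⟨n, b⟩; cases b <;> simp [Lit.toForm, Sat, Model.restrict]

lemma sat_litConj {L : List Lit} :
    Sat M (litConj L) s ↔ ∀ l ∈ L, Sat M (Lit.toForm l) s := sat_bigConj_map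

lemma sat_litDisj {L : List Lit} :
    Sat M (litDisj L) s ↔ ∃ l ∈ L, Sat M (Lit.toForm l) s := sat_bigOr_map

lemma sat_negate {l : Lit} :
    Sat M (Lit.toForm l.negate) s ↔ ¬ Sat M (Lit.toForm l) s := by
  rcases l with ⟨n, b⟩; cases b <;> simp [Lit.toForm, Lit.negate, Sat]

lemma sat_negLitConj {L : List Lit} :
    Sat M (negLitConj L) s ↔ ¬ Sat M (litDisj L) s := by
  rw [show negLitConj L = bigConj (L.map fun l => Lit.toForm l.negate) from rfl,
    sat_bigConj_map, sat_litDisj]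
  push_neg
  exact forall₂_congr fun l _ => sat_negate

lemma sat_litConj_restrict {P : S → Prop} {L : List Lit} :
    Sat (M.restrict P) (litConj L) s ↔ Sat M (litConj L) s := by
  simp only [sat_litConj, sat_lit_restrict]

lemma sat_litDisj_restrict {P : S → Prop} {L : List Lit} :
    Sat (M.restrict P) (litDisj L) s ↔ Sat M (litDisj L) s := by
  simp only [sat_litDisj, sat_lit_restrict]

lemma sat_negLitConj_restrict {P : S → Prop} {L : List Lit} :
    Sat (M.restrict P) (negLitConj L) s ↔ Sat M (negLitConj L) s := by
  simp only [sat_negLitConj, sat_litDisj_restrict]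

end BasicSat
section Structure
variable {St : Type}

/-- The box-diamond part of a conjunct, evaluated over a fixed successor set `W`. -/
def BDov (M : Model Unit St) (W : St → Prop) (δ : DNFConj) : Prop :=
  (∀ β ∈ δ.boxes, ∀ u, W u → Sat M (litDisj β) u) ∧
  (∀ γ ∈ δ.dias, ∃ u, W u ∧ Sat M (litConj γ) u)

lemma sat_boxDia_gen {N : Model Unit St} {t : St} {W : St → Prop}
    (h : ∀ u, N.R () t u ↔ W u) {δ : DNFConj} :
    Sat N δ.boxDiaForm t ↔ BDov N W δ := by
  show (Sat N (bigConj _) t ∧ Sat N (bigConj _) t) ↔ _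
  rw [sat_bigConj_map, sat_bigConj_map]
  apply and_congr
  · apply forall₂_congr; intro β _
    show (∀ u, N.R () t u → Sat N (litDisj β) u) ↔ _
    exact forall_congr' fun u => imp_congr_left (h u)
  · apply forall₂_congr; intro γ _
    rw [sat_dia]
    exact exists_congr fun u => and_congr_left' (h u)

lemma succ_eq {M : Model Unit St} (hK : isKD45 M) {s t : St} (ht : M.R () s t) :
    ∀ u, M.R () t u ↔ M.R () s u := fun u =>
  ⟨fun h => (hK ()).1 s t u ht h, fun h => (hK ()).2.1 s t u ht h⟩

lemma sat_conjunct_gen {N : Model Unit St} {t : St} {W : St → Prop}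
    (h : ∀ u, N.R () t u ↔ W u) {δ : DNFConj} :
    Sat N δ.toForm t ↔ (Sat N δ.alphaForm t ∧ BDov N W δ) := by
  show (Sat N δ.alphaForm t ∧ Sat N δ.boxDiaForm t) ↔ _
  rw [sat_boxDia_gen h]

lemma sat_dnf {N : Model Unit St} {t : St} {φ : DNF} :
    Sat N (DNF.toForm φ) t ↔ ∃ δ ∈ φ, Sat N δ.toForm t := sat_bigOr_map

/-- In the restricted model, literals, literal conjunctions/disjunctions and
alpha-parts keep their truth values. -/
lemma sat_alpha_restrict {M : Model Unit St} {P : St → Prop} {t : St} {δ : DNFConj} :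
    Sat (M.restrict P) δ.alphaForm t ↔ Sat M δ.alphaForm t := sat_litConj_restrict

lemma restrict_succ {M : Model Unit St} {P : St → Prop} {t : St} {W : St → Prop}
    (h : ∀ u, M.R () t u ↔ W u) :
    ∀ u, (M.restrict P).R () t u ↔ (W u ∧ P u) := by
  intro u
  show (M.R () t u ∧ P u) ↔ _
  rw [h]

/-- Satisfaction of t(θ). -/
lemma sat_tForm {M : Model Unit St} {s : St} {Ssel : List DNFConj} {θ : DNFConj} :
    Sat M (tForm Ssel θ) s ↔
      (Sat M θ.alphaForm s ∧
        ∀ γ ∈ θ.dias, ∃ σ ∈ Ssel, ∃ u, M.R () s u ∧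
          Sat M σ.alphaForm u ∧ Sat M (litConj γ) u) := by
  show (Sat M θ.alphaForm s ∧ Sat M (bigConj _) s) ↔ _
  rw [sat_bigConj_map]
  apply and_congr_right'
  apply forall₂_congr; intro γ _
  rw [sat_bigOr_map]
  apply exists_congr; intro σ
  apply and_congr_right'
  rw [sat_dia]
  apply exists_congr; intro u
  apply and_congr_right'
  exact Iff.rfl

end Structure
section Core
variable {St : Type}

/-- The model after announcing φ. -/
def Mres (M : Model Unit St) (φ : DNF) : Model Unit St :=
  M.restrict (fun u => Sat M (DNF.toForm φ) u)

/-- The surviving successors of `s` after announcing φ. -/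
def Wp (M : Model Unit St) (s : St) (φ : DNF) (u : St) : Prop :=
  M.R () s u ∧ Sat M (DNF.toForm φ) u

lemma BDov_restrict {M : Model Unit St} {P W' : St → Prop} {δ : DNFConj} :
    BDov (M.restrict P) W' δ ↔ BDov M W' δ := by
  unfold BDov
  apply and_congr
  · exact forall₂_congr fun β _ => forall₂_congr fun u _ => sat_litDisj_restrict
  · exact forall₂_congr fun γ _ => exists_congr fun u =>
      and_congr_right fun _ => sat_litConj_restrict

lemma satMres_conjunct {M : Model Unit St} {s : St} {φ : DNF} {θ : DNFConj} :
    Sat (Mres M φ) θ.toForm s ↔ (Sat M θ.alphaForm s ∧ BDov M (Wp M s φ) θ) := by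
  have h : ∀ u, (Mres M φ).R () s u ↔ Wp M s φ u := fun u => Iff.rfl
  rw [sat_conjunct_gen h, show Mres M φ = M.restrict (fun u => Sat M (DNF.toForm φ) u) from rfl,
    BDov_restrict, sat_alpha_restrict]

lemma Wprime_iff {M : Model Unit St} {s : St} {φ : DNF} (hK : isKD45 M)
    {Ssel : List DNFConj} (hA : ∀ σ ∈ Ssel, σ ∈ φ ∧ BDov M (M.R () s) σ)
    (hB : ∀ δ ∈ φ, BDov M (M.R () s) δ → δ ∈ Ssel) (u : St) :
    Wp M s φ u ↔ (M.R () s u ∧ ∃ σ ∈ Ssel, Sat M σ.alphaForm u) := by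
  constructor
  · rintro ⟨hu, hsat⟩
    refine ⟨hu, ?_⟩
    rcases sat_dnf.1 hsat with ⟨δ, hδ, hδsat⟩
    rw [sat_conjunct_gen (succ_eq hK hu)] at hδsat
    exact ⟨δ, hB δ hδ hδsat.2, hδsat.1⟩
  · rintro ⟨hu, σ, hσ, hα⟩
    refine ⟨hu, sat_dnf.2 ⟨σ, (hA σ hσ).1, ?_⟩⟩
    rw [sat_conjunct_gen (succ_eq hK hu)]
    exact ⟨hα, (hA σ hσ).2⟩

lemma satMres_conjunct' {M : Model Unit St} {s : St} {φ : DNF} (hK : isKD45 M)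
    {Ssel : List DNFConj} (hA : ∀ σ ∈ Ssel, σ ∈ φ ∧ BDov M (M.R () s) σ)
    (hB : ∀ δ ∈ φ, BDov M (M.R () s) δ → δ ∈ Ssel) {θ : DNFConj} :
    Sat (Mres M φ) θ.toForm s ↔
      (Sat M (tForm Ssel θ) s ∧
        ∀ β ∈ θ.boxes, ∀ u, Wp M s φ u → Sat M (litDisj β) u) := by
  rw [satMres_conjunct, sat_tForm]
  constructor
  · rintro ⟨hα, hbox, hdia⟩
    refine ⟨⟨hα, ?_⟩, hbox⟩
    intro γ hγ
    rcases hdia γ hγ with ⟨u, hu, hγu⟩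
    rcases (Wprime_iff hK hA hB u).1 hu with ⟨hru, σ, hσ, hσα⟩
    exact ⟨σ, hσ, u, hru, hσα, hγu⟩
  · rintro ⟨⟨hα, hdia⟩, hbox⟩
    refine ⟨hα, hbox, ?_⟩
    intro γ hγ
    rcases hdia γ hγ with ⟨σ, hσ, u, hru, hσα, hγu⟩
    exact ⟨u, (Wprime_iff hK hA hB u).2 ⟨hru, σ, hσ, hσα⟩, hγu⟩

end Core
section AB
variable {St : Type}

lemma mem_filter_not_contains {L φl : List DNFConj} {δ : DNFConj} :
    δ ∈ φl.filter (fun x => !(L.contains x)) ↔ (δ ∈ φl ∧ δ ∉ L) := by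
  simp [List.mem_filter]

lemma lemB {M : Model Unit St} {s : St} {φ : DNF} (hK : isKD45 M)
    {Ssel Tsel : List DNFConj} {βsel : DNFConj → List Lit}
    (hS : ∀ σ ∈ Ssel, σ ∈ φ) (hβ : ∀ θ ∈ Tsel, βsel θ ∈ θ.boxes)
    (hχ : Sat M (chiForm φ Ssel Tsel βsel) s) :
    ¬ Sat M (DNF.toForm φ) s ∧ Sat M (Form.dia () (DNF.toForm φ)) s ∧
      ¬ Sat (Mres M φ) (DNF.toForm φ) s := by
  obtain ⟨hnφ, hdφ, hχ1, hχ2, hχ3⟩ :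
      (¬ Sat M (DNF.toForm φ) s) ∧ Sat M (Form.dia () (DNF.toForm φ)) s ∧
        Sat M (chi1 φ Ssel Tsel) s ∧ Sat M (chi2 φ Ssel) s ∧
        Sat M (chi3 Ssel Tsel βsel) s := hχ
  unfold chi2 at hχ2
  obtain ⟨hχ2a, hχ2b⟩ := hχ2
  have hA : ∀ σ ∈ Ssel, σ ∈ φ ∧ BDov M (M.R () s) σ := by
    intro σ hσ
    refine ⟨hS σ hσ, ?_⟩
    have := sat_bigConj_map.1 hχ2a σ hσ
    rwa [sat_boxDia_gen (fun u => Iff.rfl)] at this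
  have hB : ∀ δ ∈ φ, BDov M (M.R () s) δ → δ ∈ Ssel := by
    intro δ hδ hbd
    by_contra hns
    have := sat_bigConj_map.1 hχ2b δ (mem_filter_not_contains.2 ⟨hδ, hns⟩)
    rw [show Sat M (Form.neg δ.boxDiaForm) s = ¬ Sat M δ.boxDiaForm s from rfl,
      sat_boxDia_gen (fun u => Iff.rfl)] at this
    exact this hbd
  refine ⟨hnφ, hdφ, ?_⟩
  intro hsat
  rcases sat_dnf.1 hsat with ⟨θ, hθφ, hθ⟩
  rw [satMres_conjunct' hK hA hB] at hθ
  obtain ⟨htθ, hboxθ⟩ := hθ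
  by_cases hT : θ ∈ Tsel
  · -- use χ3
    have h3 := sat_bigConj_map.1 hχ3 θ hT
    rcases sat_bigOr_map.1 h3 with ⟨σ, hσ, hd⟩
    rcases sat_dia.1 hd with ⟨u, hru, hσα, hneg⟩
    have hWp : Wp M s φ u := (Wprime_iff hK hA hB u).2 ⟨hru, σ, hσ, hσα⟩
    have := hboxθ (βsel θ) (hβ θ hT) u hWp
    exact (sat_negLitConj.1 hneg) this
  · -- use χ1, second part
    unfold chi1 at hχ1
    obtain ⟨hχ1a, hχ1b⟩ := hχ1
    have := sat_bigConj_map.1 hχ1b θ (mem_filter_not_contains.2 ⟨hθφ, hT⟩)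
    exact this htθ

lemma lemA {M : Model Unit St} {s : St} {φ : DNF} (hK : isKD45 M)
    (hnφ : ¬ Sat M (DNF.toForm φ) s)
    (hdφ : Sat M (Form.dia () (DNF.toForm φ)) s)
    (hres : ¬ Sat (Mres M φ) (DNF.toForm φ) s) :
    ∃ (Ssel Tsel : List DNFConj) (βsel : DNFConj → List Lit),
      (∀ σ ∈ Ssel, σ ∈ φ) ∧ (∀ θ ∈ Tsel, θ ∈ φ) ∧
      (∀ θ ∈ Tsel, βsel θ ∈ θ.boxes) ∧ Sat M (chiForm φ Ssel Tsel βsel) s := by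
  classical
  set Ssel : List DNFConj := φ.filter (fun δ => decide (BDov M (M.R () s) δ)) with hSdef
  have hA : ∀ σ ∈ Ssel, σ ∈ φ ∧ BDov M (M.R () s) σ := by
    intro σ hσ
    rw [hSdef, List.mem_filter, decide_eq_true_iff] at hσ
    exact hσ
  have hB : ∀ δ ∈ φ, BDov M (M.R () s) δ → δ ∈ Ssel := by
    intro δ hδ hbd
    rw [hSdef, List.mem_filter, decide_eq_true_iff]
    exact ⟨hδ, hbd⟩
  set Tsel : List DNFConj := φ.filter (fun θ => decide (Sat M (tForm Ssel θ) s)) with hTdef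
  have hTmem : ∀ θ, θ ∈ Tsel ↔ (θ ∈ φ ∧ Sat M (tForm Ssel θ) s) := by
    intro θ; rw [hTdef, List.mem_filter, decide_eq_true_iff]
  -- failing box existence for members of Tsel
  have hfail : ∀ θ ∈ Tsel, ∃ β ∈ θ.boxes, ∃ u, Wp M s φ u ∧ ¬ Sat M (litDisj β) u := by
    intro θ hθ
    rcases (hTmem θ).1 hθ with ⟨hθφ, htθ⟩
    have hnθ : ¬ Sat (Mres M φ) θ.toForm s := fun h => hres (sat_dnf.2 ⟨θ, hθφ, h⟩)
    rw [satMres_conjunct' hK hA hB] at hnθ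
    push_neg at hnθ
    exact hnθ htθ
  set βsel : DNFConj → List Lit := fun θ =>
    if h : ∃ β ∈ θ.boxes, ∃ u, Wp M s φ u ∧ ¬ Sat M (litDisj β) u
    then h.choose else [] with hβdef
  have hβspec : ∀ θ ∈ Tsel, βsel θ ∈ θ.boxes ∧
      ∃ u, Wp M s φ u ∧ ¬ Sat M (litDisj (βsel θ)) u := by
    intro θ hθ
    have h := hfail θ hθ
    rw [hβdef]
    simp only [dif_pos h]
    exact ⟨h.choose_spec.1, h.choose_spec.2⟩
  refine ⟨Ssel, Tsel, βsel, fun σ hσ => (hA σ hσ).1, fun θ hθ => ((hTmem θ).1 hθ).1,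
    fun θ hθ => (hβspec θ hθ).1, ?_⟩
  unfold chiForm chi1 chi2 chi3
  refine ⟨hnφ, hdφ, ⟨?_, ?_⟩, ⟨?_, ?_⟩, ?_⟩
  · -- χ1 positive
    exact sat_bigConj_map.2 fun θ hθ => ((hTmem θ).1 hθ).2
  · -- χ1 negative
    refine sat_bigConj_map.2 fun δ hδ => ?_
    rcases mem_filter_not_contains.1 hδ with ⟨hδφ, hδT⟩
    intro ht
    exact hδT ((hTmem δ).2 ⟨hδφ, ht⟩)
  · -- χ2 positive
    refine sat_bigConj_map.2 fun σ hσ => ?_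
    rw [sat_boxDia_gen (fun u => Iff.rfl)]
    exact (hA σ hσ).2
  · -- χ2 negative
    refine sat_bigConj_map.2 fun δ hδ => ?_
    rcases mem_filter_not_contains.1 hδ with ⟨hδφ, hδS⟩
    show ¬ Sat M δ.boxDiaForm s
    rw [sat_boxDia_gen (fun u => Iff.rfl)]
    exact fun hbd => hδS (hB δ hδφ hbd)
  · -- χ3
    refine sat_bigConj_map.2 fun θ hθ => ?_
    rcases (hβspec θ hθ).2 with ⟨u, hWp, hnd⟩
    rcases (Wprime_iff hK hA hB u).1 hWp with ⟨hru, σ, hσ, hσα⟩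
    refine sat_bigOr_map.2 ⟨σ, hσ, sat_dia.2 ⟨u, hru, hσα, ?_⟩⟩
    exact sat_negLitConj.2 hnd

end AB
/-- Characterization of single-agent believable true lies: a single-agent
(announcement-free) formula φ in disjunctive normal form is a believable true
lie — (¬φ ∧ ◇φ) → [φ]φ is valid on KD45 — iff φ is not a disjunctive lying
form. -/
theorem believable_true_lie_characterization (φ : DNF) :
    (∀ (S : Type) (M : Model Unit S) (s : S), isKD45 M →
      Sat M (Form.imp (Form.conj (Form.neg (DNF.toForm φ)) (Form.dia () (DNF.toForm φ)))
        (Form.ann (DNF.toForm φ) (DNF.toForm φ))) s)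
      ↔ ¬ IsDisjunctiveLyingForm φ := by
  constructor
  · rintro hvalid ⟨Ssel, Tsel, βsel, hS, hT, hβ, Styp, Mm, st, hK, hχ⟩
    obtain ⟨h1, h2, h3⟩ := lemB hK hS hβ hχ
    have himp := sat_imp.1 (hvalid Styp Mm st hK)
    exact h3 (himp ⟨h1, h2⟩)
  · intro hndlf S M st hK
    rw [sat_imp]
    rintro ⟨h1, h2⟩
    by_contra hres
    obtain ⟨Ssel, Tsel, βsel, hS', hT', hβ', hχ⟩ := lemA hK h1 h2 hres
    exact hndlf ⟨Ssel, Tsel, βsel, hS', hT', hβ', S, M, st, hK, hχ⟩
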